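/- arXiv:0801.3792 — 2 statements merged into one kernel-verified Lean document; each statement's English description precedes it below -/
import Mathlib

section
/- Let G = C_n ⊕ C_n with n ≥ 2, and suppose every minimal zero-sum sequence over G of length 2n−1 contains some element with multiplicity n−1. Then every minimal zero-sum sequence S over G of length 2n−1 has the form S = e_1^{n−1} ∏_{ν=1}^{n} (x_ν e_1 + e_2) for some basis (e_1, e_2) of G and integers x_1, …, x_n ∈ [0, n−1] with x_1 + … + x_n ≡ 1 (mod n). -/
section AuxLemmas
open Multiset




lemma exists_le_map {α β : Type*} [DecidableEq α] [DecidableEq β] {f : α → β} :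
    ∀ {U' : Multiset β} {T : Multiset α}, U' ≤ T.map f → ∃ U ≤ T, U.map f = U' := by
  intro U'
  induction U' using Multiset.induction with
  | empty => intro T _; exact ⟨0, Multiset.zero_le _, rfl⟩
  | cons b u' ih =>
    intro T h
    have hb : b ∈ T.map f := mem_of_le h (mem_cons_self _ _)
    obtain ⟨a, haT, hab⟩ := Multiset.mem_map.1 hb
    have h1 : u' ≤ (T.erase a).map f := by
      have h2 : u' = (b ::ₘ u').erase b := by rw [Multiset.erase_cons_head]
      have h3 : (T.map f).erase b = (T.erase a).map f := by
        rw [← hab, ← Multiset.map_erase_of_mem _ _ haT]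
      rw [h2, ← h3]
      exact Multiset.erase_le_erase b h
    obtain ⟨U, hU, hUm⟩ := ih h1
    refine ⟨a ::ₘ U, ?_, ?_⟩
    · rw [← Multiset.cons_erase haT]
      exact Multiset.cons_le_cons _ hU
    · rw [Multiset.map_cons, hUm, hab]

lemma slice_sum_ne_zero {n : ℕ} {W : Multiset (ZMod n)} (hcard : Multiset.card W = n)
    (hmin : ∀ U ≤ W, U ≠ 0 → U.sum = 0 → U = W)
    {L D : List (ZMod n)} (hL : (L : Multiset (ZMod n)) = W)
    (hD : D.Sublist L) (hne : D ≠ []) (hlt : D.length < n) :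
    D.sum ≠ 0 := by
  intro h0
  have hle : (D : Multiset (ZMod n)) ≤ W := hL ▸ (Multiset.coe_le.2 hD.subperm)
  have hDW : (D : Multiset (ZMod n)) = W := by
    refine hmin _ hle ?_ ?_
    · simpa using hne
    · simpa using h0
  have : D.length = n := by
    have := congrArg Multiset.card hDW
    simpa [hcard] using this
  omega

lemma partial_sums_props {n : ℕ} {W : Multiset (ZMod n)} (hcard : Multiset.card W = n)
    (hmin : ∀ U ≤ W, U ≠ 0 → U.sum = 0 → U = W)
    {L : List (ZMod n)} (hL : (L : Multiset (ZMod n)) = W) :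
    (∀ i ∈ Finset.Icc 1 (n - 1), (L.take i).sum ≠ 0) ∧
      Set.InjOn (fun i => (L.take i).sum) (Finset.Icc 1 (n - 1)) := by
  have hLn : L.length = n := by
    have := congrArg Multiset.card hL
    simpa [hcard] using this
  have hnz : ∀ i ∈ Finset.Icc 1 (n - 1), (L.take i).sum ≠ 0 := by
    intro i hi
    simp only [Finset.mem_Icc] at hi
    refine slice_sum_ne_zero hcard hmin hL (List.take_sublist _ _) ?_ ?_
    · have h1 : (L.take i).length = i := by simp [hLn]; omega
      intro h; rw [h] at h1; simp at h1; omega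
    · simp [hLn]; omega
  refine ⟨hnz, ?_⟩
  have main : ∀ i j, 1 ≤ i → j ≤ n - 1 → i < j → (L.take i).sum ≠ (L.take j).sum := by
    intro i j hi hj hlt heq
    have hlen : ((L.drop i).take (j - i)).length = j - i := by
      simp [hLn]; omega
    have key : ((L.drop i).take (j - i)).sum ≠ 0 :=
      slice_sum_ne_zero hcard hmin hL
        ((List.take_sublist _ _).trans (List.drop_sublist _ _))
        (fun h => by rw [h] at hlen; simp at hlen; omega)
        (by omega)
    apply key
    have hsplit : L.take j = L.take i ++ (L.drop i).take (j - i) := by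
      have h := List.take_add (l := L) (i := i) (j := j - i)
      rwa [show i + (j - i) = j by omega] at h
    have hs : (L.take j).sum = (L.take i).sum + ((L.drop i).take (j - i)).sum := by
      rw [hsplit, List.sum_append]
    rw [← heq] at hs
    exact (add_eq_left.mp hs.symm)
  intro i hi j hj hij
  simp only [Finset.coe_Icc, Set.mem_Icc] at hi hj
  by_contra hne
  rcases Nat.lt_or_ge i j with h | h
  · exact main i j hi.1 hj.2 h hij
  · exact main j i hj.1 hi.2 (by omega) hij.symm

lemma minzero_const {n : ℕ} [NeZero n] (hn : 2 ≤ n) {W : Multiset (ZMod n)}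
    (hcard : Multiset.card W = n)
    (hmin : ∀ U ≤ W, U ≠ 0 → U.sum = 0 → U = W) :
    ∃ c, W = Multiset.replicate n c := by
  have hall : ∀ x ∈ W, ∀ y ∈ W, x = y := by
    by_contra hcon
    push_neg at hcon
    obtain ⟨x, hx, y, hy, hxy⟩ := hcon
    have hyx : y ≠ x := fun h => hxy h.symm
    have hy' : y ∈ W.erase x := (Multiset.mem_erase_of_ne hyx).2 hy
    set M := (W.erase x).erase y with hM
    have hW : W = x ::ₘ y ::ₘ M := by
      rw [hM, Multiset.cons_erase hy', Multiset.cons_erase hx]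
    set R := M.toList with hRdef
    have hR : (R : Multiset (ZMod n)) = M := Multiset.coe_toList M
    have hL1 : ((x :: y :: R : List (ZMod n)) : Multiset (ZMod n)) = W := by
      rw [hW, ← hR]; rfl
    have hL2 : ((y :: x :: R : List (ZMod n)) : Multiset (ZMod n)) = W := by
      rw [hW, ← hR, Multiset.cons_swap]; rfl
    obtain ⟨hnz1, hinj1⟩ := partial_sums_props hcard hmin hL1
    obtain ⟨hnz2, hinj2⟩ := partial_sums_props hcard hmin hL2
    have hy0 : y ≠ 0 := by
      intro h0
      have h1 := hmin {y} (Multiset.singleton_le.2 hy) (by simp) (by simp [h0])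
      have h2 := congrArg Multiset.card h1
      simp [hcard] at h2
      omega
    set p : ℕ → ZMod n := fun i => ((x :: y :: R).take i).sum with hp
    have hcardIcc : (Finset.Icc 1 (n-1)).card = n - 1 := by
      simp [Nat.card_Icc]
    have himage : (Finset.Icc 1 (n-1)).image p = ({0}ᶜ : Finset (ZMod n)) := by
      apply Finset.eq_of_subset_of_card_le
      · intro z hz
        obtain ⟨i, hi, rfl⟩ := Finset.mem_image.1 hz
        simpa using hnz1 i hi
      · rw [Finset.card_image_of_injOn hinj1, hcardIcc, Finset.card_compl]
        simp [ZMod.card]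
    have hyP : y ∈ (Finset.Icc 1 (n-1)).image p := by
      rw [himage]; simpa using hy0
    obtain ⟨i, hi, hpi⟩ := Finset.mem_image.1 hyP
    rcases eq_or_ne i 1 with rfl | hi1
    · have hx1 : p 1 = x := by simp [hp]
      exact hxy (by rw [← hpi, hx1])
    · have hi2 : 2 ≤ i := by
        simp only [Finset.mem_Icc] at hi; omega
      set q : ℕ → ZMod n := fun j => ((y :: x :: R).take j).sum with hq
      have hq1 : q 1 = y := by simp [hq]
      have hqi : q i = p i := by
        obtain ⟨k, rfl⟩ : ∃ k, i = k + 2 := ⟨i - 2, by omega⟩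
        simp only [hq, hp, List.take_succ_cons, List.sum_cons]
        ring
      have h1mem : (1:ℕ) ∈ (Finset.Icc 1 (n-1) : Finset ℕ) := by
        simp; omega
      have heq := hinj2 (Finset.mem_coe.2 h1mem) (Finset.mem_coe.2 hi)
        (by simp only [hq1, hqi, hpi])
      omega
  obtain ⟨c, hc⟩ : ∃ c, c ∈ W := by
    have h0 : W ≠ 0 := by intro h; rw [h] at hcard; simp at hcard; omega
    exact Multiset.exists_mem_of_ne_zero h0
  refine ⟨c, ?_⟩
  rw [Multiset.eq_replicate]
  exact ⟨hcard, fun b hb => hall b hb c hc⟩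

lemma exists_bezout {n : ℕ} [NeZero n] {a b : ZMod n}
    (h : addOrderOf ((a, b) : ZMod n × ZMod n) = n) :
    ∃ u v : ZMod n, u * a + v * b = 1 := by
  have hsmul : ∀ z : ZMod n, n • z = 0 := by
    intro z
    rw [nsmul_eq_mul]
    simp [ZMod.natCast_self]
  set H := AddSubgroup.closure ({a, b} : Set (ZMod n)) with hH
  have haH : a ∈ H := AddSubgroup.subset_closure (by simp)
  have hbH : b ∈ H := AddSubgroup.subset_closure (by simp)
  obtain ⟨g, hg⟩ := IsAddCyclic.exists_generator (α := H)
  -- every element of H is a zmultiple of ↑g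
  have hmul : ∀ z ∈ H, ∃ k : ℤ, z = k • (g : ZMod n) := by
    intro z hz
    obtain ⟨k, hk⟩ := hg ⟨z, hz⟩
    refine ⟨k, ?_⟩
    have hk' := congrArg Subtype.val hk
    simpa using hk'.symm
  -- order of ↑g is n
  have hdvd : addOrderOf (g : ZMod n) ∣ n :=
    addOrderOf_dvd_of_nsmul_eq_zero (hsmul _)
  have hkill : addOrderOf (g : ZMod n) • ((a, b) : ZMod n × ZMod n) = 0 := by
    obtain ⟨k1, hk1⟩ := hmul a haH
    obtain ⟨k2, hk2⟩ := hmul b hbH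
    have ha0 : addOrderOf (g : ZMod n) • a = 0 := by
      rw [hk1, smul_comm, addOrderOf_nsmul_eq_zero, smul_zero]
    have hb0 : addOrderOf (g : ZMod n) • b = 0 := by
      rw [hk2, smul_comm, addOrderOf_nsmul_eq_zero, smul_zero]
    have : addOrderOf (g : ZMod n) • ((a, b) : ZMod n × ZMod n)
        = (addOrderOf (g : ZMod n) • a, addOrderOf (g : ZMod n) • b) := rfl
    rw [this, ha0, hb0]
    rfl
  have hnd : n ∣ addOrderOf (g : ZMod n) := by
    have hh := addOrderOf_dvd_of_nsmul_eq_zero hkill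
    rwa [h] at hh
  have hord : addOrderOf (g : ZMod n) = n := Nat.dvd_antisymm hdvd hnd
  -- zmultiples of g is everything
  have htop : AddSubgroup.zmultiples (g : ZMod n) = ⊤ := by
    apply AddSubgroup.eq_top_of_card_eq
    rw [Nat.card_zmultiples, hord, Nat.card_zmod]
  have hHtop : H = ⊤ := by
    rw [eq_top_iff, ← htop]
    intro z hz
    obtain ⟨k, hk⟩ := AddSubgroup.mem_zmultiples_iff.1 hz
    rw [← hk]
    exact AddSubgroup.zsmul_mem H g.2 k
  have h1 : (1 : ZMod n) ∈ H := by rw [hHtop]; trivial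
  rw [hH, AddSubgroup.mem_closure_pair] at h1
  obtain ⟨s, t, hst⟩ := h1
  exact ⟨(s : ZMod n), (t : ZMod n), by
    rw [← hst]
    push_cast [zsmul_eq_mul]
    ring⟩


end AuxLemmas



/-- A minimal zero-sum sequence: nonempty, sum zero, and no proper nonempty
subsequence has sum zero. -/
def IsMinZeroSum {G : Type*} [AddCommGroup G] (S : Multiset G) : Prop :=
  S ≠ 0 ∧ S.sum = 0 ∧ ∀ T ≤ S, T ≠ 0 → T ≠ S → T.sum ≠ 0

/-- `(e1, e2)` is a basis of a group of the form `C_n ⊕ C_n`: both elements have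
order `n`, they generate the group, and they are independent. -/
def IsBasisPair {G : Type*} [AddCommGroup G] (n : ℕ) (e1 e2 : G) : Prop :=
  addOrderOf e1 = n ∧ addOrderOf e2 = n ∧
    (∀ g : G, ∃ x y : ℤ, g = x • e1 + y • e2) ∧
    (∀ x y : ℤ, x • e1 + y • e2 = 0 → x • e1 = 0 ∧ y • e2 = 0)

theorem stmt_15 (n : ℕ) (hn : 2 ≤ n)
    (hB : ∀ S : Multiset (ZMod n × ZMod n), IsMinZeroSum S →
        Multiset.card S = 2 * n - 1 →
        ∃ g : ZMod n × ZMod n, S.count g = n - 1)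
    (S : Multiset (ZMod n × ZMod n)) (hmin : IsMinZeroSum S)
    (hlen : Multiset.card S = 2 * n - 1) :
    ∃ e1 e2 : ZMod n × ZMod n, IsBasisPair n e1 e2 ∧
      ∃ x : Fin n → ℕ, (∀ ν, x ν ≤ n - 1) ∧ (∑ ν, x ν) ≡ 1 [MOD n] ∧
        S = Multiset.replicate (n - 1) e1 +
          Multiset.map (fun ν => (x ν : ℤ) • e1 + e2) Finset.univ.val := by
  haveI : NeZero n := ⟨by omega⟩
  obtain ⟨hS0, hSsum, hSmin⟩ := hmin
  have hsmulG : ∀ g : ZMod n × ZMod n, n • g = 0 := by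
    intro g
    have h1 : n • g.1 = 0 := by rw [nsmul_eq_mul]; simp
    have h2 : n • g.2 = 0 := by rw [nsmul_eq_mul]; simp
    have : n • g = (n • g.1, n • g.2) := rfl
    rw [this, h1, h2]; rfl
  obtain ⟨e1, hc⟩ := hB S ⟨hS0, hSsum, hSmin⟩ hlen
  -- Step 1: order of e1
  have he1 : addOrderOf e1 = n := by
    have hd : addOrderOf e1 ∣ n := addOrderOf_dvd_of_nsmul_eq_zero (hsmulG e1)
    have hpos : 0 < addOrderOf e1 := addOrderOf_pos e1
    by_contra hne
    have hlt : addOrderOf e1 < n :=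
      lt_of_le_of_ne (Nat.le_of_dvd (by omega) hd) hne
    have hle : Multiset.replicate (addOrderOf e1) e1 ≤ S :=
      (Multiset.le_count_iff_replicate_le (a := e1) (s := S)).1 (by rw [hc]; omega)
    refine hSmin _ hle ?_ ?_ ?_
    · intro h
      have := congrArg Multiset.card h
      simp only [Multiset.card_replicate, Multiset.card_zero] at this; omega
    · intro h
      have := congrArg Multiset.card h
      simp [hlen] at this; omega
    · rw [Multiset.sum_replicate]
      exact addOrderOf_nsmul_eq_zero e1
  -- Step 2: decomposition S = replicate (n-1) e1 + T
  have hrep : Multiset.replicate (n - 1) e1 ≤ S :=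
    (Multiset.le_count_iff_replicate_le (a := e1) (s := S)).1 (by rw [hc])
  set T := S - Multiset.replicate (n - 1) e1 with hTdef
  have hST : S = Multiset.replicate (n - 1) e1 + T := by
    rw [hTdef, add_comm]
    exact (tsub_add_cancel_of_le hrep).symm
  have hTS : T ≤ S := by rw [hST]; exact Multiset.le_add_left _ _
  have hTcard : Multiset.card T = n := by
    have := congrArg Multiset.card hST
    simp [hlen] at this; omega
  have hcT : Multiset.count e1 T = 0 := by
    have h := congrArg (Multiset.count e1) hST
    rw [Multiset.count_add, Multiset.count_replicate, if_pos rfl, hc] at h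
    omega
  have hTsum : T.sum = e1 := by
    have h1 : (n - 1) • e1 + T.sum = 0 := by
      rw [← Multiset.sum_replicate, ← Multiset.sum_add, ← hST, hSsum]
    have h2 : (n - 1) • e1 + e1 = 0 := by
      have : (n - 1) • e1 + e1 = ((n - 1) + 1) • e1 := by
        rw [add_nsmul, one_nsmul]
      rw [this, show n - 1 + 1 = n by omega, hsmulG]
    exact add_left_cancel (h1.trans h2.symm)
  -- the homomorphism χ
  obtain ⟨u, v, huv⟩ := exists_bezout (a := e1.1) (b := e1.2) (by rw [Prod.mk.eta]; exact he1)
  set χ : (ZMod n × ZMod n) →+ ZMod n :=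
    AddMonoidHom.mk' (fun g => e1.2 * g.1 - e1.1 * g.2)
      (by intro g h; simp [Prod.fst_add, Prod.snd_add]; ring) with hχdef
  have hχe1 : χ e1 = 0 := by simp [hχdef]; ring
  have hsmulfst : ∀ (k : ZMod n) (w : ZMod n × ZMod n), (k • w).1 = k * w.1 := fun _ _ => rfl
  have hsmulsnd : ∀ (k : ZMod n) (w : ZMod n × ZMod n), (k • w).2 = k * w.2 := fun _ _ => rfl
  have hker : ∀ w : ZMod n × ZMod n, χ w = 0 → w = (u * w.1 + v * w.2) • e1 := by
    intro w hw
    have hab : e1.2 * w.1 - e1.1 * w.2 = 0 := hw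
    have h1 : w.1 = (u * w.1 + v * w.2) * e1.1 := by linear_combination (-w.1) * huv + v * hab
    have h2 : w.2 = (u * w.1 + v * w.2) * e1.2 := by linear_combination (-w.2) * huv - u * hab
    have : ((u * w.1 + v * w.2) • e1 : ZMod n × ZMod n)
        = ((u * w.1 + v * w.2) * e1.1, (u * w.1 + v * w.2) * e1.2) := rfl
    rw [this, ← h1, ← h2]
  -- key: zero-sum-mod-e1 submultisets of T are all of T
  have key : ∀ U ≤ T, U ≠ 0 → χ U.sum = 0 → U = T := by
    intro U hUT hU0 hU
    set k : ZMod n := u * U.sum.1 + v * U.sum.2 with hk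
    have hUk : U.sum = k • e1 := hker _ hU
    have hUcard : Multiset.card U ≤ n :=
      le_trans (Multiset.card_le_card hUT) (le_of_eq hTcard)
    rcases Nat.eq_zero_or_pos k.val with hm | hm
    · have hk0 : k = 0 := (ZMod.val_eq_zero _).1 hm
      exfalso
      refine hSmin U (hUT.trans hTS) hU0 ?_ ?_
      · intro h
        have := congrArg Multiset.card h
        rw [hlen] at this; omega
      · rw [hUk, hk0, zero_smul]
    · by_contra hUT'
      have hUlt : Multiset.card U < n :=
        lt_of_lt_of_le (Multiset.card_lt_card (lt_of_le_of_ne hUT hUT')) (le_of_eq hTcard)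
      set m := k.val with hmdef
      have hmn : m < n := ZMod.val_lt k
      set V := U + Multiset.replicate (n - m) e1 with hV
      have hVle : V ≤ S := by
        rw [Multiset.le_iff_count]
        intro g
        rcases eq_or_ne g e1 with rfl | hg
        · have hU1 : Multiset.count g U = 0 := by
            have := Multiset.count_le_of_le g hUT
            omega
          rw [hV, Multiset.count_add, Multiset.count_replicate, if_pos rfl, hU1, hc]
          omega
        · rw [hV, Multiset.count_add, Multiset.count_replicate, if_neg (fun h => hg h.symm)]
          have h1 := Multiset.count_le_of_le g hUT
          have h2 := Multiset.count_le_of_le g hTS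
          omega
      refine hSmin V hVle ?_ ?_ ?_
      · intro h
        have hcV := congrArg Multiset.card h
        rw [hV, Multiset.card_add, Multiset.card_replicate] at hcV
        simp at hcV
        exact hU0 (Multiset.card_eq_zero.1 (by omega))
      · intro h
        have := congrArg Multiset.card h
        rw [hV, Multiset.card_add, Multiset.card_replicate, hlen] at this
        omega
      · rw [hV, Multiset.sum_add, Multiset.sum_replicate, hUk]
        have hkm : k • e1 = m • e1 := by
          conv_lhs => rw [show k = ((m : ℕ) : ZMod n) by
            rw [hmdef, ZMod.natCast_val, ZMod.cast_id]]
          rw [Nat.cast_smul_eq_nsmul]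
        rw [hkm, ← add_nsmul, show m + (n - m) = n by omega, hsmulG]
  -- W := image of T under χ
  set W : Multiset (ZMod n) := T.map ⇑χ with hWdef
  have hWcard : Multiset.card W = n := by
    rw [hWdef, Multiset.card_map, hTcard]
  have hWmin : ∀ U' ≤ W, U' ≠ 0 → U'.sum = 0 → U' = W := by
    intro U' hU' hU'0 hU's
    obtain ⟨U, hUT, hUm⟩ := exists_le_map hU'
    have hU0 : U ≠ 0 := by
      intro h; rw [h] at hUm; exact hU'0 (by simpa using hUm.symm)
    have hUs : χ U.sum = 0 := by
      rw [AddMonoidHom.map_multiset_sum, hUm, hU's]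
    rw [← hUm, key U hUT hU0 hUs]
  obtain ⟨c, hWc⟩ := minzero_const hn hWcard hWmin
  -- order of c is n
  have hcord : addOrderOf c = n := by
    have hd : addOrderOf c ∣ n := addOrderOf_dvd_of_nsmul_eq_zero (by
      rw [nsmul_eq_mul]; simp)
    have hpos : 0 < addOrderOf c := addOrderOf_pos c
    by_contra hne
    have hlt : addOrderOf c < n := lt_of_le_of_ne (Nat.le_of_dvd (by omega) hd) hne
    have hle : Multiset.replicate (addOrderOf c) c ≤ W := by
      rw [hWc]
      exact Multiset.replicate_le_replicate c |>.2 (le_of_lt hlt)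
    have h := hWmin _ hle (by
        intro h; have := congrArg Multiset.card h; simp only [Multiset.card_replicate, Multiset.card_zero] at this; omega)
      (by rw [Multiset.sum_replicate]; exact addOrderOf_nsmul_eq_zero c)
    have := congrArg Multiset.card h
    rw [Multiset.card_replicate, hWcard] at this
    omega
  -- pick e2 in T
  obtain ⟨e2, he2T⟩ := Multiset.exists_mem_of_ne_zero (s := T) (by
    intro h; rw [h] at hTcard; simp at hTcard; omega)
  have hχT : ∀ t ∈ T, χ t = c := by
    intro t ht
    have h1 : χ t ∈ W := Multiset.mem_map_of_mem _ ht
    rw [hWc] at h1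
    exact Multiset.eq_of_mem_replicate h1
  have hχe2 : χ e2 = c := hχT e2 he2T
  -- order of e2 is n
  have he2ord : addOrderOf e2 = n := by
    refine Nat.dvd_antisymm (addOrderOf_dvd_of_nsmul_eq_zero (hsmulG e2)) ?_
    have h1 : (addOrderOf e2) • c = 0 := by
      rw [← hχe2, ← AddMonoidHom.map_nsmul, addOrderOf_nsmul_eq_zero]
      exact _root_.map_zero χ
    have h2 := addOrderOf_dvd_of_nsmul_eq_zero h1
    rwa [hcord] at h2
  -- c generates ZMod n
  have htopc : AddSubgroup.zmultiples c = ⊤ := by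
    apply AddSubgroup.eq_top_of_card_eq
    rw [Nat.card_zmultiples, hcord, Nat.card_zmod]
  -- generation
  have hcast : ∀ k : ZMod n, ((k.val : ℤ) : ZMod n) = k := by
    intro k
    push_cast
    rw [ZMod.natCast_val, ZMod.cast_id]
  have hzsmul : ∀ (k : ZMod n) (w : ZMod n × ZMod n), ((k.val : ℤ)) • w = k • w := by
    intro k w
    rw [← Int.cast_smul_eq_zsmul (ZMod n), hcast]
  have hgen : ∀ g : ZMod n × ZMod n, ∃ x y : ℤ, g = x • e1 + y • e2 := by
    intro g
    have hmem : χ g ∈ AddSubgroup.zmultiples c := by rw [htopc]; trivial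
    obtain ⟨y, hy⟩ := AddSubgroup.mem_zmultiples_iff.1 hmem
    have h0 : χ (g - y • e2) = 0 := by
      rw [_root_.map_sub, AddMonoidHom.map_zsmul, hχe2, hy, sub_self]
    have h1 := hker _ h0
    set k : ZMod n := u * (g - y • e2).1 + v * (g - y • e2).2 with hkdef
    refine ⟨(k.val : ℤ), y, ?_⟩
    rw [hzsmul, ← h1]
    abel
  -- independence
  have hindep : ∀ x y : ℤ, x • e1 + y • e2 = 0 → x • e1 = 0 ∧ y • e2 = 0 := by
    intro x y h
    have h1 : y • c = 0 := by
      have := congrArg χ h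
      rw [_root_.map_zero, _root_.map_add, AddMonoidHom.map_zsmul, AddMonoidHom.map_zsmul, hχe1, hχe2,
        smul_zero, zero_add] at this
      exact this
    have h2 : (addOrderOf c : ℤ) ∣ y := addOrderOf_dvd_iff_zsmul_eq_zero.2 h1
    rw [hcord, ← he2ord] at h2
    have h3 : y • e2 = 0 := addOrderOf_dvd_iff_zsmul_eq_zero.1 h2
    rw [h3, add_zero] at h
    exact ⟨h, h3⟩
  -- define x
  have hwrite : ∀ t ∈ T, t = (u * (t - e2).1 + v * (t - e2).2) • e1 + e2 := by
    intro t ht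
    have h0 : χ (t - e2) = 0 := by
      rw [_root_.map_sub, hχT t ht, hχe2, sub_self]
    have h1 := hker _ h0
    rw [← h1]
    abel
  set ξ : ZMod n × ZMod n → ℕ := fun t => (u * (t - e2).1 + v * (t - e2).2).val with hξdef
  set g0 : ZMod n × ZMod n → ZMod n × ZMod n := fun t => ((ξ t : ℕ) : ℤ) • e1 + e2 with hg0def
  have hg0 : ∀ t ∈ T, g0 t = t := by
    intro t ht
    rw [hg0def]
    simp only
    rw [hξdef]
    simp only
    rw [hzsmul]
    exact (hwrite t ht).symm
  have hmapT : Multiset.map g0 T = T := by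
    conv_rhs => rw [← Multiset.map_id T]
    exact Multiset.map_congr rfl (fun t ht => hg0 t ht)
  set L := T.toList with hLdef
  have hL : (L : Multiset (ZMod n × ZMod n)) = T := Multiset.coe_toList T
  have hLn : L.length = n := by
    have := congrArg Multiset.card hL
    rw [Multiset.coe_card, hTcard] at this
    exact this
  have hmap : Multiset.map (fun ν : Fin n =>
      ((ξ (L.get (Fin.cast hLn.symm ν)) : ℕ) : ℤ) • e1 + e2) Finset.univ.val = T := by
    rw [Fin.univ_val_map]
    have h1 : (List.ofFn (fun ν : Fin n =>
        ((ξ (L.get (Fin.cast hLn.symm ν)) : ℕ) : ℤ) • e1 + e2))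
        = List.ofFn (fun ν : Fin n => g0 (L.get (Fin.cast hLn.symm ν))) := rfl
    rw [h1, ← List.ofFn_congr hLn (fun i : Fin L.length => g0 (L.get i)),
      (by exact List.ofFn_getElem_eq_map L g0 : List.ofFn (fun i : Fin L.length => g0 (L.get i)) = L.map g0), ← Multiset.map_coe, hL, hmapT]
  have hTs' : (∑ ν : Fin n, (((ξ (L.get (Fin.cast hLn.symm ν)) : ℕ) : ℤ) • e1 + e2)) = e1 := by
    have hTs := hTsum
    rw [← hmap] at hTs
    exact hTs
  rw [Finset.sum_add_distrib, Finset.sum_const, Finset.card_univ, Fintype.card_fin,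
    hsmulG, add_zero, ← Finset.sum_smul] at hTs'
  have hcast2 : (∑ ν : Fin n, ((ξ (L.get (Fin.cast hLn.symm ν)) : ℕ) : ℤ))
      = ((∑ ν : Fin n, ξ (L.get (Fin.cast hLn.symm ν)) : ℕ) : ℤ) := by
    push_cast
    rfl
  rw [hcast2] at hTs'
  have hz : (((∑ ν : Fin n, ξ (L.get (Fin.cast hLn.symm ν)) : ℕ) : ℤ) - 1) • e1 = 0 := by
    rw [sub_smul, one_smul, hTs', sub_self]
  have hdvd : ((n : ℕ) : ℤ) ∣ ((∑ ν : Fin n, ξ (L.get (Fin.cast hLn.symm ν)) : ℕ) : ℤ) - 1 := by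
    have h := addOrderOf_dvd_iff_zsmul_eq_zero.2 hz
    rwa [he1] at h
  refine ⟨e1, e2, ⟨he1, he2ord, hgen, hindep⟩,
    fun ν => ξ (L.get (Fin.cast hLn.symm ν)), ?_, ?_, ?_⟩
  · intro ν
    have := ZMod.val_lt (u * ((L.get (Fin.cast hLn.symm ν)) - e2).1
      + v * ((L.get (Fin.cast hLn.symm ν)) - e2).2)
    rw [hξdef]
    simp only
    omega
  · rw [Nat.modEq_iff_dvd]
    have h := dvd_neg.mpr hdvd
    rwa [neg_sub] at h
  · rw [hST, hmap]
end

section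
/- Let G = C_n ⊕ C_n with n ≥ 2 and basis (e_1, e_2'). Suppose S is a minimal zero-sum sequence over G of length 2n−1 with v_{e_1}(S) = n−1. Then there exist b ∈ [0, n−1] with gcd(b, n) = 1 and a_1', …, a_n' ∈ [0, n−1] with a_1' + … + a_n' ≡ 1 (mod n), such that S = e_1^{n−1} ∏_{ν=1}^{n} (a_ν' e_1 + b e_2'). -/
open Multiset in
lemma my_exists_preimage_of_le_map {α β : Type*} [DecidableEq α] (f : α → β) (B' : Multiset β) :
    ∀ s : Multiset α, B' ≤ s.map f → ∃ t, t ≤ s ∧ t.map f = B' := by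
  induction B' using Multiset.induction_on with
  | empty => exact fun s _ => ⟨0, Multiset.zero_le _, rfl⟩
  | cons b B'' ih =>
    intro s hle
    have hb : b ∈ s.map f := mem_of_le hle (mem_cons_self _ _)
    obtain ⟨a, ha, hfa⟩ := mem_map.mp hb
    have hmap : s.map f = b ::ₘ (s.erase a).map f := by
      rw [← hfa, ← Multiset.map_cons, Multiset.cons_erase ha]
    rw [hmap] at hle
    have hB'' : B'' ≤ (s.erase a).map f := (Multiset.cons_le_cons_iff b).mp hle
    obtain ⟨t, ht, htm⟩ := ih _ hB''
    refine ⟨a ::ₘ t, ?_, by simp [htm, hfa]⟩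
    calc a ::ₘ t ≤ a ::ₘ s.erase a := Multiset.cons_le_cons a ht
      _ = s := Multiset.cons_erase ha

lemma my_prefix_bij {n : ℕ} (hn : 2 ≤ n) (l : List (ZMod n)) (hl : l.length = n)
    (hmin : ∀ m : Multiset (ZMod n), m ≤ ↑l → m ≠ 0 → m ≠ ↑l → m.sum ≠ 0) :
    Function.Bijective (fun i : Fin n => (l.take (i.1 + 1)).sum) := by
  haveI : NeZero n := ⟨by omega⟩
  rw [Fintype.bijective_iff_injective_and_card]
  refine ⟨?_, by simp [ZMod.card]⟩
  have key : ∀ i j : Fin n, i.1 < j.1 →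
      (l.take (i.1 + 1)).sum = (l.take (j.1 + 1)).sum → False := by
    intro i j hlt hij
    set m : Multiset (ZMod n) := ↑((l.drop (i.1 + 1)).take (j.1 - i.1)) with hm
    have hsub : m ≤ ↑l :=
      Multiset.coe_le.mpr ((List.take_sublist _ _).trans (List.drop_sublist _ _)).subperm
    have hmcard : Multiset.card m = j.1 - i.1 := by
      rw [hm, Multiset.coe_card, List.length_take, List.length_drop, hl]
      have := j.2; omega
    have hsplit : l.take (j.1 + 1) = l.take (i.1 + 1) ++ (l.drop (i.1 + 1)).take (j.1 - i.1) := by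
      rw [← List.take_add]
      congr 1
      omega
    have hmsum : m.sum = 0 := by
      have h2 := congrArg List.sum hsplit
      rw [List.sum_append, ← hij] at h2
      have h4 : (l.take (i.1+1)).sum + ((l.drop (i.1+1)).take (j.1-i.1)).sum
          = (l.take (i.1+1)).sum + 0 := by rw [add_zero]; exact h2.symm
      have h3 := add_left_cancel h4
      rw [hm, Multiset.sum_coe]
      exact h3
    refine hmin m hsub ?_ ?_ hmsum
    · intro h
      rw [h] at hmcard
      simp at hmcard
      omega
    · intro h
      rw [h] at hmcard
      rw [Multiset.coe_card, hl] at hmcard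
      have := j.2; omega
  intro i j hij
  simp only [] at hij
  rcases Nat.lt_trichotomy i.1 j.1 with h | h | h
  · exact absurd hij (by intro hh; exact key i j h hh)
  · exact Fin.ext h
  · exact absurd hij.symm (by intro hh; exact key j i h hh)

lemma my_swap_eq {n : ℕ} (hn : 2 ≤ n) (x y : ZMod n) (r : List (ZMod n))
    (hlen : (x :: y :: r).length = n)
    (hmin : ∀ m : Multiset (ZMod n), m ≤ ↑(x::y::r) → m ≠ 0 → m ≠ ↑(x::y::r) → m.sum ≠ 0) :
    x = y := by
  have hperm : ((y::x::r : List (ZMod n)) : Multiset (ZMod n)) = ↑(x::y::r) :=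
    Quot.sound (List.Perm.swap _ _ _)
  have hlen2 : (y::x::r).length = n := by simpa using hlen
  have h1 := my_prefix_bij hn (x::y::r) hlen hmin
  have h2 := my_prefix_bij hn (y::x::r) hlen2
    (fun m hle h0 hne => hmin m (by rwa [hperm] at hle) h0 (by rwa [hperm] at hne))
  obtain ⟨j, hj⟩ := h1.2 y
  rcases j with ⟨jv, hjv⟩
  simp only [] at hj
  match jv, hjv with
  | 0, hjv => simpa using hj
  | (k+1), hjv =>
    exfalso
    have hagree : ((x::y::r).take (k+1+1)).sum = ((y::x::r).take (k+1+1)).sum := by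
      simp only [List.take_succ_cons, List.sum_cons]
      ring
    have heq : (⟨k+1, hjv⟩ : Fin n) = ⟨0, by omega⟩ := by
      apply h2.1
      simp only []
      rw [← hagree, hj]
      simp
    simp [Fin.ext_iff] at heq

lemma my_key {n : ℕ} (hn : 2 ≤ n) (B : Multiset (ZMod n)) (hcard : Multiset.card B = n)
    (hmin : ∀ B' ≤ B, B' ≠ 0 → B' ≠ B → B'.sum ≠ 0) :
    ∃ β : ZMod n, B = Multiset.replicate n β ∧ Nat.gcd β.val n = 1 := by
  haveI : NeZero n := ⟨by omega⟩
  obtain ⟨β, hβ⟩ : ∃ β, β ∈ B := Multiset.exists_mem_of_ne_zero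
    (by intro h; rw [h] at hcard; simp at hcard; omega)
  have hall : ∀ g ∈ B, g = β := by
    intro g hg
    by_contra hne
    obtain ⟨B1, hB1⟩ := Multiset.exists_cons_of_mem hβ
    have hg1 : g ∈ B1 := by
      rcases Multiset.mem_cons.mp (hB1 ▸ hg) with h | h
      · exact absurd h hne
      · exact h
    obtain ⟨R, hR⟩ := Multiset.exists_cons_of_mem hg1
    have hcoe : ((β :: g :: R.toList : List (ZMod n)) : Multiset (ZMod n)) = B := by
      rw [hB1, hR]
      rw [← Multiset.cons_coe, ← Multiset.cons_coe, Multiset.coe_toList]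
    have hlen : (β :: g :: R.toList).length = n := by
      have := congrArg Multiset.card hcoe
      rw [Multiset.coe_card] at this
      rw [this, hcard]
    have := my_swap_eq hn β g R.toList hlen
      (fun m hle h0 hne2 => hmin m (by rwa [hcoe] at hle) h0 (by rwa [hcoe] at hne2))
    exact hne this.symm
  have hrep : B = Multiset.replicate n β := Multiset.eq_replicate.mpr ⟨hcard, hall⟩
  refine ⟨β, hrep, ?_⟩
  by_contra hgcd
  set d := Nat.gcd β.val n with hd
  have hdn : d ∣ n := Nat.gcd_dvd_right _ _
  have hdb : d ∣ β.val := Nat.gcd_dvd_left _ _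
  have hdpos : 0 < d := Nat.gcd_pos_of_pos_right _ (by omega)
  have hd2 : 2 ≤ d := by omega
  have hq : n / d < n := Nat.div_lt_self (by omega) hd2
  have hq1 : 1 ≤ n / d := Nat.div_pos (Nat.le_of_dvd (by omega) hdn) (by omega)
  have hsum0 : (Multiset.replicate (n / d) β).sum = 0 := by
    rw [Multiset.sum_replicate, nsmul_eq_mul]
    conv_lhs => rw [← ZMod.natCast_zmod_val β]
    rw [← Nat.cast_mul, ZMod.natCast_eq_zero_iff]
    obtain ⟨k, hk⟩ := hdb
    exact ⟨k, by rw [hk, ← mul_assoc, Nat.div_mul_cancel hdn]⟩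
  refine hmin _ (by rw [hrep]; exact (Multiset.replicate_le_replicate β).mpr (by omega)) ?_ ?_ hsum0
  · intro h
    have := congrArg Multiset.card h
    simp at this
    have := Nat.le_of_dvd (by omega) hdn; omega
  · intro h
    rw [hrep] at h
    have := congrArg Multiset.card h
    simp at this
    omega

theorem stmt_19 (n : ℕ) (hn : 2 ≤ n) (e1 e2' : ZMod n × ZMod n)
    (hbasis : IsBasisPair n e1 e2')
    (S : Multiset (ZMod n × ZMod n)) (hmin : IsMinZeroSum S)
    (hlen : Multiset.card S = 2 * n - 1) (hcount : S.count e1 = n - 1) :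
    ∃ b : ℕ, b ≤ n - 1 ∧ Nat.gcd b n = 1 ∧
      ∃ a : Fin n → ℕ, (∀ ν, a ν ≤ n - 1) ∧ (∑ ν, a ν) ≡ 1 [MOD n] ∧
        S = Multiset.replicate (n - 1) e1 +
          Multiset.map (fun ν => (a ν : ℤ) • e1 + (b : ℤ) • e2') Finset.univ.val := by
  haveI : NeZero n := ⟨by omega⟩
  obtain ⟨ho1, ho2, hgen, hind⟩ := hbasis
  obtain ⟨hS0, hSsum, hSmin⟩ := hmin
  choose X Y hXY using hgen
  set A : ZMod n × ZMod n → ZMod n := fun g => ((X g : ZMod n)) with hA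
  set Bc : ZMod n × ZMod n → ZMod n := fun g => ((Y g : ZMod n)) with hBc
  have hzsmul : ∀ (p : ZMod n) (v : ZMod n × ZMod n), p • v = (p.val : ℤ) • v := by
    intro p v
    rw [← Int.cast_smul_eq_zsmul (ZMod n)]
    push_cast
    rw [ZMod.natCast_zmod_val]
  have hrepr : ∀ g : ZMod n × ZMod n, g = A g • e1 + Bc g • e2' := by
    intro g
    rw [hA, hBc]
    simp only [Int.cast_smul_eq_zsmul]
    exact hXY g
  have huniq0 : ∀ p q : ZMod n, p • e1 + q • e2' = 0 → p = 0 ∧ q = 0 := by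
    intro p q h
    rw [hzsmul p e1, hzsmul q e2'] at h
    obtain ⟨h1, h2⟩ := hind _ _ h
    rw [natCast_zsmul] at h1 h2
    have hdvd1 : addOrderOf e1 ∣ p.val := addOrderOf_dvd_of_nsmul_eq_zero h1
    have hdvd2 : addOrderOf e2' ∣ q.val := addOrderOf_dvd_of_nsmul_eq_zero h2
    rw [ho1] at hdvd1
    rw [ho2] at hdvd2
    have hp : p.val = 0 := Nat.eq_zero_of_dvd_of_lt hdvd1 (ZMod.val_lt p)
    have hq : q.val = 0 := Nat.eq_zero_of_dvd_of_lt hdvd2 (ZMod.val_lt q)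
    constructor
    · rw [← ZMod.natCast_zmod_val p, hp, Nat.cast_zero]
    · rw [← ZMod.natCast_zmod_val q, hq, Nat.cast_zero]
  have huniq : ∀ p q p' q' : ZMod n, p • e1 + q • e2' = p' • e1 + q' • e2' → p = p' ∧ q = q' := by
    intro p q p' q' h
    have h0 : (p - p') • e1 + (q - q') • e2' = 0 := by
      rw [sub_smul, sub_smul]
      rw [show p • e1 - p' • e1 + (q • e2' - q' • e2')
          = (p • e1 + q • e2') - (p' • e1 + q' • e2') by abel]
      exact sub_eq_zero_of_eq h
    obtain ⟨h1, h2⟩ := huniq0 _ _ h0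
    exact ⟨sub_eq_zero.mp h1, sub_eq_zero.mp h2⟩
  have hsum_repr : ∀ U : Multiset (ZMod n × ZMod n),
      U.sum = (U.map A).sum • e1 + (U.map Bc).sum • e2' := by
    intro U
    induction U using Multiset.induction_on with
    | empty => simp
    | cons g s ih =>
      simp only [Multiset.sum_cons, Multiset.map_cons, add_smul, ih]
      conv_lhs => rw [hrepr g]
      abel
  have hrepS : Multiset.replicate (n-1) e1 ≤ S :=
    Multiset.le_count_iff_replicate_le.mp (by rw [hcount])
  set T : Multiset (ZMod n × ZMod n) := S - Multiset.replicate (n-1) e1 with hT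
  have hSTdec : S = Multiset.replicate (n-1) e1 + T := by
    rw [hT, add_comm]
    exact (tsub_add_cancel_of_le hrepS).symm
  have hcardT : Multiset.card T = n := by
    rw [hT, Multiset.card_sub hrepS, hlen, Multiset.card_replicate]
    omega
  have hTle : T ≤ S := by
    rw [hSTdec]; exact le_add_self
  have hsumT : ((n-1 : ℕ) • e1) + T.sum = 0 := by
    rw [← Multiset.sum_replicate, ← Multiset.sum_add, ← hSTdec]
    exact hSsum
  have hAt1 : (T.map A).sum = 1 ∧ (T.map Bc).sum = 0 := by
    have h1 : (((n-1:ℕ) : ZMod n) + (T.map A).sum) • e1 + (T.map Bc).sum • e2'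
        = (0 : ZMod n) • e1 + (0 : ZMod n) • e2' := by
      rw [add_smul, Nat.cast_smul_eq_nsmul]
      simp only [zero_smul, add_zero]
      rw [hsum_repr T] at hsumT
      rw [add_assoc]
      exact hsumT
    obtain ⟨ha, hb⟩ := huniq _ _ _ _ h1
    constructor
    · have hcast : ((n-1:ℕ) : ZMod n) = -1 := by
        rw [Nat.cast_sub (by omega : 1 ≤ n), ZMod.natCast_self, Nat.cast_one]
        ring
      rw [hcast] at ha
      linear_combination ha
    · exact hb
  have hminB : ∀ B' ≤ T.map Bc, B' ≠ 0 → B' ≠ T.map Bc → B'.sum ≠ 0 := by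
    intro B' hle h0 hneB hs0
    obtain ⟨T', hT'le, hT'map⟩ := my_exists_preimage_of_le_map Bc B' T hle
    have hT'0 : T' ≠ 0 := by
      rintro rfl
      simp at hT'map
      exact h0 hT'map.symm
    have hT'ne : T' ≠ T := fun h => hneB (by rw [← hT'map, h])
    set c := (T'.map A).sum with hc
    have hsumT' : T'.sum = c • e1 := by
      rw [hsum_repr T', hT'map, hs0, zero_smul, add_zero]
    by_cases hc0 : c = 0
    · refine hSmin T' (hT'le.trans hTle) hT'0 ?_ (by rw [hsumT', hc0, zero_smul])
      intro h
      have h1 := Multiset.card_le_card hT'le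
      have h2 : Multiset.card T' = 2 * n - 1 := by rw [h, hlen]
      omega
    · set k := n - c.val with hk
      have hcv1 : 1 ≤ c.val := by
        rcases Nat.eq_zero_or_pos c.val with h | h
        · exact absurd ((ZMod.val_eq_zero c).mp h) hc0
        · exact h
      have hcv2 : c.val < n := ZMod.val_lt c
      have hU : Multiset.replicate k e1 + T' ≤ S := by
        rw [hSTdec]
        exact add_le_add ((Multiset.replicate_le_replicate e1).mpr (by omega)) hT'le
      have hT'card : Multiset.card T' < n := by
        have := Multiset.card_lt_card (lt_of_le_of_ne hT'le hT'ne)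
        omega
      refine hSmin _ hU ?_ ?_ ?_
      · intro h
        apply hT'0
        rw [← Multiset.card_eq_zero]
        have := congrArg Multiset.card h
        simp [Multiset.card_add] at this
        omega
      · intro h
        have := congrArg Multiset.card h
        rw [Multiset.card_add, Multiset.card_replicate, hlen] at this
        omega
      · have h5 := addOrderOf_nsmul_eq_zero e1
        rw [ho1] at h5
        rw [Multiset.sum_add, Multiset.sum_replicate, hsumT', hzsmul c e1, natCast_zsmul,
          ← add_nsmul, show k + c.val = n by omega]
        exact h5
  obtain ⟨β, hBrep, hgcd⟩ := my_key hn (T.map Bc) (by rw [Multiset.card_map, hcardT]) hminB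
  have hTβ : ∀ g ∈ T, Bc g = β := by
    intro g hg
    have hm : Bc g ∈ T.map Bc := Multiset.mem_map_of_mem Bc hg
    rw [hBrep] at hm
    exact Multiset.eq_of_mem_replicate hm
  refine ⟨β.val, by have := ZMod.val_lt β; omega, hgcd, ?_⟩
  set t := T.toList with ht
  have htT : (t : Multiset (ZMod n × ZMod n)) = T := Multiset.coe_toList T
  have htlen : t.length = n := by rw [ht, Multiset.length_toList, hcardT]
  set a : Fin n → ℕ := fun ν => (A (t.get (Fin.cast htlen.symm ν))).val with ha
  have hofn : List.ofFn (fun ν : Fin n => t.get (Fin.cast htlen.symm ν)) = t := by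
    apply List.ext_get
    · simp [htlen]
    · intro i h1 h2
      rw [List.get_ofFn]
      rfl
  have hofn2 : List.ofFn (fun ν : Fin n => A (t.get (Fin.cast htlen.symm ν))) = t.map A := by
    conv_rhs => rw [← hofn, List.map_ofFn]
    rfl
  refine ⟨a, fun ν => by
    have := ZMod.val_lt (A (t.get (Fin.cast htlen.symm ν)))
    simp only [ha]
    omega, ?_, ?_⟩
  · rw [← ZMod.natCast_eq_natCast_iff]
    have : ((∑ ν, a ν : ℕ) : ZMod n) = (T.map A).sum := by
      push_cast
      rw [ha]
      simp only [ZMod.natCast_zmod_val]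
      rw [show (∑ ν : Fin n, A (t.get (Fin.cast htlen.symm ν)))
          = ((Finset.univ.val : Multiset (Fin n)).map
              (fun ν => A (t.get (Fin.cast htlen.symm ν)))).sum from rfl]
      rw [Fin.univ_val_map, hofn2, ← htT]
      rfl
    rw [this, hAt1.1, Nat.cast_one]
  · rw [hSTdec]
    congr 1
    have hfun : ∀ ν : Fin n, ((a ν : ℤ) • e1 + ((β.val : ℕ) : ℤ) • e2')
        = t.get (Fin.cast htlen.symm ν) := by
      intro ν
      have hmem : t.get (Fin.cast htlen.symm ν) ∈ T := by
        rw [← htT]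
        exact List.get_mem t _
      conv_rhs => rw [hrepr (t.get (Fin.cast htlen.symm ν))]
      rw [hTβ _ hmem, hzsmul (A _) e1, hzsmul β e2', ha]
    exact (calc Multiset.map (fun ν => (a ν : ℤ) • e1 + ((β.val : ℕ) : ℤ) • e2') Finset.univ.val
        = ↑(List.ofFn (fun ν : Fin n => (a ν : ℤ) • e1 + ((β.val : ℕ) : ℤ) • e2')) :=
          Fin.univ_val_map _
      _ = ↑(List.ofFn (fun ν : Fin n => t.get (Fin.cast htlen.symm ν))) := by
          rw [funext hfun]
      _ = ↑t := by rw [hofn]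
      _ = T := htT).symm
end
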